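/- Let d ≥ 1, let ρ ∈ [0,∞), let Λ ⊆ [0,1]^d be ρ-proximate, and set ρ' = min(ρ, 1/2). Then for every SLKKM coloring χ : Λ → C and every ε > 0, there exists a point p ∈ [0,1]^d such that the open ℓ∞ ball of radius ε centered at p contains points of Λ of at least ⌈(1 + (ε−ρ')/(1+(ε−ρ')))^d⌉ different colors, i.e. |{c ∈ C : χ⁻¹(c) ∩ B°_∞(ε, p) ≠ ∅}| ≥ ⌈(1 + (ε−ρ')/(1+(ε−ρ')))^d⌉. -/

import Mathlib

open Set MeasureTheory Metric Filter
open scoped ENNReal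

noncomputable section NSaux

def clmp (x : ℝ) : ℝ := max 0 (min x 1)

lemma clmp_of_neg {x : ℝ} (h : x < 0) : clmp x = 0 := by
  unfold clmp
  rw [min_eq_left (by linarith), max_eq_left (by linarith)]

lemma clmp_of_gt {x : ℝ} (h : 1 < x) : clmp x = 1 := by
  unfold clmp
  rw [min_eq_right (by linarith), max_eq_right (by linarith)]

lemma clmp_of_mem {x : ℝ} (h0 : 0 ≤ x) (h1 : x ≤ 1) : clmp x = x := by
  unfold clmp
  rw [min_eq_left h1, max_eq_right h0]

lemma clmp_mem (x : ℝ) : clmp x ∈ Icc (0:ℝ) 1 := by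
  rcases lt_or_ge x 0 with h | h
  · rw [clmp_of_neg h]; norm_num
  rcases le_or_gt x 1 with h1 | h1
  · rw [clmp_of_mem h h1]; exact ⟨h, h1⟩
  · rw [clmp_of_gt h1]; norm_num

lemma continuous_clmp : Continuous clmp := by
  unfold clmp
  exact continuous_const.max ((continuous_id.min continuous_const))

lemma abs_clmp_sub_le {x y : ℝ} (h0 : 0 ≤ y) (h1 : y ≤ 1) : |clmp x - y| ≤ |x - y| := by
  rcases lt_or_ge x 0 with h | h
  · rw [clmp_of_neg h, zero_sub, abs_neg, abs_of_nonneg h0, abs_sub_comm,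
      abs_of_nonneg (by linarith)]
    linarith
  rcases le_or_gt x 1 with h' | h'
  · rw [clmp_of_mem h h']
  · rw [clmp_of_gt h', abs_of_nonneg (by linarith), abs_of_nonneg (by linarith)]
    linarith

section onedim
variable {a β x : ℝ}

lemma beta_facts (ha : 0 < a) (hβ : β * (1+a) = 1+2*a) : 1 ≤ β ∧ β ≤ 2 := by
  constructor <;> nlinarith

lemma hom_top_mem (ha : 0 < a) (hβ : β * (1+a) = 1+2*a) (h0 : 0 ≤ x) (h1 : x ≤ 1+a) :
    -a ≤ β * (x - (1+a)) + (1+a) ∧ β * (x - (1+a)) + (1+a) ≤ 1+a := by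
  obtain ⟨hβ1, hβ2⟩ := beta_facts ha hβ
  constructor <;> nlinarith [mul_nonneg (by linarith : (0:ℝ) ≤ β) h0,
    mul_nonneg (by linarith : (0:ℝ) ≤ β) (by linarith : (0:ℝ) ≤ 1+a-x)]

lemma hom_bot_mem (ha : 0 < a) (hβ : β * (1+a) = 1+2*a) (h0 : -a ≤ x) (h1 : x ≤ 1) :
    -a ≤ β * (x - (-a)) + (-a) ∧ β * (x - (-a)) + (-a) ≤ 1+a := by
  obtain ⟨hβ1, hβ2⟩ := beta_facts ha hβ
  constructor <;> nlinarith [mul_nonneg (by linarith : (0:ℝ) ≤ β) (by linarith : (0:ℝ) ≤ x+a),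
    mul_nonneg (by linarith : (0:ℝ) ≤ β) (by linarith : (0:ℝ) ≤ 1-x)]

lemma hom_top_close (ha : 0 < a) (hβ : β * (1+a) = 1+2*a) (h0 : 0 ≤ x) (h1 : x ≤ 1+a) :
    |(β * (x - (1+a)) + (1+a)) - clmp x| ≤ a := by
  obtain ⟨hβ1, hβ2⟩ := beta_facts ha hβ
  rcases le_or_gt x 1 with h | h
  · rw [clmp_of_mem h0 h, abs_le]
    constructor <;> nlinarith [mul_nonneg (by linarith : (0:ℝ) ≤ β - 1) h0,
      mul_le_mul_of_nonneg_left h (by linarith : (0:ℝ) ≤ β - 1),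
      mul_pos ha ha]
  · rw [clmp_of_gt h, abs_le]
    constructor <;> nlinarith [mul_nonneg (by linarith : (0:ℝ) ≤ 2 - β) (by linarith : (0:ℝ) ≤ 1+a-x),
      mul_nonneg (by linarith : (0:ℝ) ≤ β) (by linarith : (0:ℝ) ≤ 1+a-x)]

lemma hom_bot_close (ha : 0 < a) (hβ : β * (1+a) = 1+2*a) (h0 : -a ≤ x) (h1 : x ≤ 1) :
    |(β * (x - (-a)) + (-a)) - clmp x| ≤ a := by
  obtain ⟨hβ1, hβ2⟩ := beta_facts ha hβ
  rcases lt_or_ge x 0 with h | h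
  · rw [clmp_of_neg h, abs_le]
    constructor <;> nlinarith [mul_nonneg (by linarith : (0:ℝ) ≤ β) (by linarith : (0:ℝ) ≤ x+a),
      mul_nonneg (by linarith : (0:ℝ) ≤ 2 - β) (by linarith : (0:ℝ) ≤ x+a)]
  · rw [clmp_of_mem h h1, abs_le]
    constructor <;> nlinarith [mul_nonneg (by linarith : (0:ℝ) ≤ β - 1) (by linarith : (0:ℝ) ≤ x+a),
      mul_le_mul_of_nonneg_left (by linarith : x + a ≤ 1 + a) (by linarith : (0:ℝ) ≤ β - 1)]

end onedim

end NSaux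

/-- A face of the cube `[0,1]^d`: a product `∏ᵢ Fᵢ` where each `Fᵢ` is `{0}`, `{1}`, or `[0,1]`. -/
def IsFace (d : ℕ) (F : Set (Fin d → ℝ)) : Prop :=
  ∃ s : Fin d → Set ℝ,
    (∀ i, s i = {0} ∨ s i = {1} ∨ s i = Set.Icc 0 1) ∧ F = Set.univ.pi s

/-- `Λ ⊆ [0,1]^d` is `ρ`-proximate: for every face `F` and every `x ∈ F` there is
`y ∈ F ∩ Λ` with `‖x − y‖_∞ ≤ ρ`. -/
def IsProximate (d : ℕ) (ρ : ℝ) (Λ : Set (Fin d → ℝ)) : Prop :=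
  ∀ F : Set (Fin d → ℝ), IsFace d F → ∀ x ∈ F, ∃ y ∈ F ∩ Λ, dist x y ≤ ρ

noncomputable section NSaux2

def fset : Fin 3 → Set ℝ := fun j => if j = 0 then {0} else if j = 1 then {1} else Icc 0 1

lemma fset0 : fset 0 = {0} := rfl
lemma fset1 : fset 1 = {1} := rfl
lemma fset2 : fset 2 = Icc 0 1 := rfl

def Face (d : ℕ) (σ : Fin d → Fin 3) : Set (Fin d → ℝ) := Set.univ.pi fun i => fset (σ i)

lemma isFace_Face (d : ℕ) (σ : Fin d → Fin 3) : IsFace d (Face d σ) := by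
  refine ⟨fun i => fset (σ i), fun i => ?_, rfl⟩
  unfold fset
  simp only []
  split_ifs <;> simp

lemma isCompact_fset (j : Fin 3) : IsCompact (fset j) := by
  unfold fset; split_ifs <;> first | exact isCompact_singleton | exact isCompact_Icc

lemma isCompact_Face (d : ℕ) (σ : Fin d → Fin 3) : IsCompact (Face d σ) :=
  isCompact_univ_pi fun i => isCompact_fset (σ i)

lemma dist_one_aux {d : ℕ} {y y' : Fin d → ℝ} (hy : y ∈ Icc (0:Fin d → ℝ) 1)
    (hy' : y' ∈ Icc (0:Fin d → ℝ) 1) {i : Fin d} (h1 : y i = 1) (h0 : y' i = 0) :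
    dist y y' = 1 := by
  apply le_antisymm
  · refine (dist_pi_le_iff zero_le_one).2 fun j => ?_
    rw [Real.dist_eq, abs_le]
    have a1 := hy.1 j; have a2 := hy.2 j; have b1 := hy'.1 j; have b2 := hy'.2 j
    simp only [Pi.zero_apply, Pi.one_apply] at a1 a2 b1 b2
    constructor <;> linarith
  · calc (1:ℝ) = dist (y i) (y' i) := by rw [Real.dist_eq, h1, h0]; norm_num
    _ ≤ dist y y' := dist_le_pi_dist y y' i

end NSaux2

theorem neighborhood_sperner
    (d : ℕ) (hd : 1 ≤ d) (ρ : ℝ) (hρ : 0 ≤ ρ)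
    (Λ : Set (Fin d → ℝ)) (hΛ : Λ ⊆ Set.Icc 0 1) (hprox : IsProximate d ρ Λ)
    (C : Type*) (χ : (Fin d → ℝ) → C)
    (hχ : ∀ x ∈ Λ, ∀ y ∈ Λ, dist x y = 1 → χ x ≠ χ y)
    (ε : ℝ) (hε : 0 < ε) :
    ∃ p ∈ Set.Icc (0 : Fin d → ℝ) 1,
      (⌈(1 + (ε - min ρ (1/2)) / (1 + (ε - min ρ (1/2)))) ^ d⌉₊ : ℕ∞) ≤
        {c : C | (Λ ∩ χ ⁻¹' {c} ∩ Metric.ball p ε).Nonempty}.encard := by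
  classical
  have hρ'le : min ρ (1/2) ≤ 1/2 := min_le_right _ _
  have h1u : (0:ℝ) < 1 + (ε - min ρ (1/2)) := by linarith
  by_cases hA : ε - min ρ (1/2) ≤ 0
  · -- trivial case : bound is at most 1
    have h0Λ : (0 : Fin d → ℝ) ∈ Λ := by
      obtain ⟨y, hy, -⟩ := hprox (Set.univ.pi fun _ => ({0}:Set ℝ))
        ⟨fun _ => {0}, fun _ => Or.inl rfl, rfl⟩ 0 (by intro i _; rfl)
      have hy0 : y = 0 := funext fun i => by
        have := hy.1 i (Set.mem_univ i); simpa using this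
      exact hy0 ▸ hy.2
    refine ⟨0, ⟨le_refl _, fun i => by norm_num⟩, ?_⟩
    have hb1 : 1 + (ε - min ρ (1/2))/(1+(ε - min ρ (1/2))) ≤ 1 := by
      have : (ε - min ρ (1/2))/(1+(ε - min ρ (1/2))) ≤ 0 := div_nonpos_iff.2 (Or.inr ⟨hA, h1u.le⟩)
      linarith
    have hb0 : 0 ≤ 1 + (ε - min ρ (1/2))/(1+(ε - min ρ (1/2))) := by
      have : -1 ≤ (ε - min ρ (1/2))/(1+(ε - min ρ (1/2))) := by
        rw [le_div_iff₀ h1u]; linarith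
      linarith
    have hpow : (1 + (ε - min ρ (1/2))/(1+(ε - min ρ (1/2))))^d ≤ 1 := pow_le_one₀ hb0 hb1
    have hceil : ⌈(1 + (ε - min ρ (1/2))/(1+(ε - min ρ (1/2))))^d⌉₊ ≤ 1 := by
      apply Nat.ceil_le.2; simpa using hpow
    calc (⌈(1 + (ε - min ρ (1/2))/(1+(ε - min ρ (1/2))))^d⌉₊ : ℕ∞) ≤ (1 : ℕ∞) := by
          exact_mod_cast hceil
      _ ≤ _ := by
          refine Set.one_le_encard_iff_nonempty.2 ⟨χ (0 : Fin d → ℝ), ?_⟩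
          exact ⟨0, ⟨h0Λ, rfl⟩, mem_ball_self hε⟩
  push_neg at hA
  rcases lt_or_ge (1/2 : ℝ) ε with hB | hC
  · -- corner case : ε > 1/2, all 2^d corners are in the ball around the center
    set cor : (Fin d → Bool) → (Fin d → ℝ) := fun b i => if b i then 1 else 0 with hcordef
    have hcorΛ : ∀ b, cor b ∈ Λ := by
      intro b
      obtain ⟨y, hy, -⟩ := hprox (Set.univ.pi fun i => if b i then ({1}:Set ℝ) else {0})
        ⟨_, fun i => by by_cases h : b i <;> simp [h], rfl⟩ (cor b)
        (by intro i _; by_cases h : b i <;> simp [hcordef, h])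
      have hyc : y = cor b := funext fun i => by
        have := hy.1 i (Set.mem_univ i)
        by_cases h : b i <;> simp [h] at this <;> simp [hcordef, h, this]
      exact hyc ▸ hy.2
    have hcorIcc : ∀ b, cor b ∈ Set.Icc (0:Fin d → ℝ) 1 := by
      intro b
      constructor <;> intro i <;> by_cases h : b i <;> simp [hcordef, h]
    have hdistcor : ∀ b b', b ≠ b' → dist (cor b) (cor b') = 1 := by
      intro b b' hne
      obtain ⟨i, hi⟩ := Function.ne_iff.1 hne
      cases hb : b i with
      | false =>
        have hb' : b' i = true := by
          cases hb2 : b' i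
          · exact absurd (hb.trans hb2.symm) hi
          · rfl
        rw [dist_comm]
        refine dist_one_aux (hcorIcc b') (hcorIcc b) (i := i) ?_ ?_ <;> simp [hcordef, hb, hb']
      | true =>
        have hb' : b' i = false := by
          cases hb2 : b' i
          · rfl
          · exact absurd (hb.trans hb2.symm) hi
        refine dist_one_aux (hcorIcc b) (hcorIcc b') (i := i) ?_ ?_ <;> simp [hcordef, hb, hb']
    have hinj : Function.Injective (fun b => χ (cor b)) := by
      intro b b' h
      by_contra hne
      exact hχ (cor b) (hcorΛ b) (cor b') (hcorΛ b') (hdistcor b b' hne) h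
    set p : Fin d → ℝ := fun _ => 1/2 with hpdef
    have hpIcc : p ∈ Set.Icc (0:Fin d → ℝ) 1 := by
      constructor <;> intro i <;> simp [hpdef] <;> norm_num
    have hball : ∀ b, cor b ∈ Metric.ball p ε := by
      intro b
      rw [Metric.mem_ball]
      refine lt_of_le_of_lt ((dist_pi_le_iff (by norm_num : (0:ℝ) ≤ 1/2)).2 fun i => ?_) hB
      by_cases h : b i <;>
        · simp only [hcordef, hpdef, h, Real.dist_eq, if_true, if_false]
          rw [abs_le]
          constructor <;> norm_num
    set filt : Finset C := Finset.univ.image (fun b : Fin d → Bool => χ (cor b)) with hfiltdef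
    have hfiltcard : filt.card = 2^d := by
      rw [hfiltdef, Finset.card_image_of_injective _ hinj, Finset.card_univ]
      simp
    have hsub : ↑filt ⊆ {c : C | (Λ ∩ χ ⁻¹' {c} ∩ Metric.ball p ε).Nonempty} := by
      intro c hc
      obtain ⟨b, -, rfl⟩ := Finset.mem_image.1 hc
      exact ⟨cor b, ⟨hcorΛ b, rfl⟩, hball b⟩
    have hu0 : 0 < ε - min ρ (1/2) := hA
    have hb2 : 1 + (ε - min ρ (1/2))/(1+(ε - min ρ (1/2))) ≤ 2 := by
      have : (ε - min ρ (1/2))/(1+(ε - min ρ (1/2))) ≤ 1 := by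
        rw [div_le_one h1u]; linarith
      linarith
    have hb0 : 0 ≤ 1 + (ε - min ρ (1/2))/(1+(ε - min ρ (1/2))) := by
      have : 0 ≤ (ε - min ρ (1/2))/(1+(ε - min ρ (1/2))) := div_nonneg hu0.le h1u.le
      linarith
    have hceil : ⌈(1 + (ε - min ρ (1/2))/(1+(ε - min ρ (1/2))))^d⌉₊ ≤ 2^d := by
      apply Nat.ceil_le.2
      push_cast
      exact pow_le_pow_left₀ hb0 hb2 d
    refine ⟨p, hpIcc, ?_⟩
    calc (⌈(1 + (ε - min ρ (1/2))/(1+(ε - min ρ (1/2))))^d⌉₊ : ℕ∞) ≤ ((2^d : ℕ) : ℕ∞) := by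
          exact_mod_cast hceil
      _ = (filt.card : ℕ∞) := by rw [hfiltcard]
      _ = (↑filt : Set C).encard := (Set.encard_coe_eq_coe_finsetCard _).symm
      _ ≤ _ := Set.encard_mono hsub
  · -- main case : ρ ≤ 1/2, 0 < ε - ρ, ε ≤ 1/2
    have hρhalf : ρ ≤ 1/2 := by
      by_contra h
      push_neg at h
      rw [min_eq_right h.le] at hA
      linarith
    rw [min_eq_left hρhalf] at hA h1u ⊢
    have hbase : 1 + (ε - ρ)/(1+(ε - ρ)) = (1+2*(ε-ρ))/(1+(ε-ρ)) := by
      field_simp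
      ring
    set m := ⌈(1 + (ε - ρ) / (1 + (ε - ρ))) ^ d⌉₊ with hmdef
    have hx0pos : 0 < (1 + (ε - ρ)/(1 + (ε - ρ)))^d := by
      apply pow_pos
      rw [hbase]
      exact div_pos (by linarith) h1u
    have hm1 : (m:ℝ) < (1 + (ε - ρ)/(1 + (ε - ρ)))^d + 1 := Nat.ceil_lt_add_one hx0pos.le
    have hmpos : 1 ≤ m := Nat.one_le_ceil_iff.2 hx0pos
    -- choose a scaling parameter a < ε - ρ
    have hφcont : ContinuousAt (fun a : ℝ => ((1+2*a)/(1+a))^d) (ε - ρ) := by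
      apply ContinuousAt.pow
      exact ContinuousAt.div (by fun_prop) (by fun_prop) h1u.ne'
    have hlt : (m:ℝ) - 1 < ((1+2*(ε-ρ))/(1+(ε-ρ)))^d := by rw [← hbase]; linarith
    have hev : ∀ᶠ a in nhdsWithin (ε-ρ) (Iio (ε-ρ)), (m:ℝ) - 1 < ((1+2*a)/(1+a))^d :=
      (hφcont.eventually_const_lt hlt).filter_mono nhdsWithin_le_nhds
    have hIoo : ∀ᶠ a in nhdsWithin (ε-ρ) (Iio (ε-ρ)), a ∈ Ioo 0 (ε-ρ) :=
      Filter.eventually_of_mem (Ioo_mem_nhdsLT_of_mem ⟨hA, le_refl _⟩) fun a ha => ha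
    obtain ⟨a, hβd', haIoo⟩ := (hev.and hIoo).exists
    obtain ⟨ha0, hau⟩ := haIoo
    set β := (1+2*a)/(1+a) with hβdef
    have h1a : (0:ℝ) < 1 + a := by linarith
    have hβeq : β * (1+a) = 1+2*a := by rw [hβdef]; field_simp
    have hβpos : 0 < β := div_pos (by linarith) h1a
    have hβd : (m:ℝ) - 1 < β^d := hβd'
    set δ := (ε - ρ - a)/2 with hδdef
    have hδ0 : 0 < δ := by rw [hδdef]; linarith
    set r := ρ + δ with hrdef
    have hρr : ρ < r := by rw [hrdef]; linarith
    have har : a + r < ε := by rw [hrdef, hδdef]; linarith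
    -- finite nets on each face
    have hYex : ∀ σ : Fin d → Fin 3, ∃ Y : Finset (Fin d → ℝ),
        (∀ y ∈ Y, y ∈ Face d σ ∧ y ∈ Λ) ∧ ∀ x ∈ Face d σ, ∃ y ∈ Y, dist x y < r := by
      intro σ
      have hbigcov : Face d σ ⊆ ⋃ y : ↥(Face d σ ∩ Λ), Metric.ball (y:Fin d → ℝ) r := by
        intro x hx
        obtain ⟨y, hy, hxy⟩ := hprox _ (isFace_Face d σ) x hx
        exact mem_iUnion.2 ⟨⟨y, hy⟩, mem_ball.2 (lt_of_le_of_lt hxy hρr)⟩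
      obtain ⟨T, hT⟩ := (isCompact_Face d σ).elim_finite_subcover
        (fun y : ↥(Face d σ ∩ Λ) => Metric.ball (y:Fin d → ℝ) r) (fun y => isOpen_ball) hbigcov
      refine ⟨T.image Subtype.val, ?_, ?_⟩
      · intro yy hyy
        obtain ⟨zz, hzT, rfl⟩ := Finset.mem_image.1 hyy
        exact ⟨zz.2.1, zz.2.2⟩
      · intro x hx
        obtain ⟨yy, hyT, hxy⟩ := mem_iUnion₂.1 (hT hx)
        exact ⟨yy.1, Finset.mem_image_of_mem _ hyT, mem_ball.1 hxy⟩
    choose Yf hY1 hY2 using hYex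
    set Yall : Finset (Fin d → ℝ) := (Finset.univ : Finset (Fin d → Fin 3)).biUnion Yf
      with hYalldef
    have hYallΛ : ∀ y ∈ Yall, y ∈ Λ := by
      intro y hy
      obtain ⟨σ, -, hyσ⟩ := Finset.mem_biUnion.1 hy
      exact (hY1 σ y hyσ).2
    set Q' : Set (Fin d → ℝ) := Icc (fun _ => -a) (fun _ => 1+a) with hQ'def
    set πQ : (Fin d → ℝ) → (Fin d → ℝ) := fun x i => clmp (x i) with hπdef
    set A : C → Set (Fin d → ℝ) := fun c => Q' ∩
      ⋃ y ∈ Yall, {x | χ y = c ∧ dist (πQ x) y < r ∧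
        (∀ i, x i < 0 → y i = 0) ∧ (∀ i, 1 < x i → y i = 1)} with hAdef
    have hAsub : ∀ c, A c ⊆ Q' := by
      intro c
      simp only [hAdef]
      exact inter_subset_left
    have hwit : ∀ c, ∀ x ∈ A c, ∃ y, y ∈ Λ ∧ χ y = c ∧ dist (πQ x) y < r ∧
        (∀ i, x i < 0 → y i = 0) ∧ (∀ i, 1 < x i → y i = 1) := by
      intro c x hx
      simp only [hAdef] at hx
      obtain ⟨-, hx2⟩ := hx
      obtain ⟨y, hyY, h⟩ := mem_iUnion₂.1 hx2
      exact ⟨y, hYallΛ y hyY, h.1, h.2.1, h.2.2.1, h.2.2.2⟩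
    have hπcont : Continuous πQ := by
      simp only [hπdef]
      exact continuous_pi fun i => continuous_clmp.comp (continuous_apply i)
    have hAmeas : ∀ c, MeasurableSet (A c) := by
      intro c
      simp only [hAdef]
      refine measurableSet_Icc.inter (Finset.measurableSet_biUnion _ fun y _ => ?_)
      by_cases hyc : χ y = c
      · have heq : {x : Fin d → ℝ | χ y = c ∧ dist (πQ x) y < r ∧
            (∀ i, x i < 0 → y i = 0) ∧ (∀ i, 1 < x i → y i = 1)}
            = {x | dist (πQ x) y < r} ∩ (({x | ∀ i, x i < 0 → y i = 0}) ∩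
              {x | ∀ i, 1 < x i → y i = 1}) := by
          ext x
          simp [hyc, and_assoc]
        rw [heq]
        refine ((isOpen_lt (hπcont.dist continuous_const) continuous_const).measurableSet).inter
          (MeasurableSet.inter ?_ ?_)
        · rw [setOf_forall]
          refine MeasurableSet.iInter fun i => ?_
          by_cases hy0 : y i = 0
          · simp [hy0]
          · have heq2 : {x : Fin d → ℝ | x i < 0 → y i = 0} = {x | 0 ≤ x i} := by
              ext x
              simp [hy0, not_lt]
            rw [heq2]
            exact measurableSet_le measurable_const (measurable_pi_apply i)
        · rw [setOf_forall]
          refine MeasurableSet.iInter fun i => ?_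
          by_cases hy1 : y i = 1
          · simp [hy1]
          · have heq2 : {x : Fin d → ℝ | 1 < x i → y i = 1} = {x | x i ≤ 1} := by
              ext x
              simp [hy1, not_lt]
            rw [heq2]
            exact measurableSet_le (measurable_pi_apply i) measurable_const
      · have heq : {x : Fin d → ℝ | χ y = c ∧ dist (πQ x) y < r ∧
            (∀ i, x i < 0 → y i = 0) ∧ (∀ i, 1 < x i → y i = 1)} = ∅ := by
          ext x
          simp [hyc]
        rw [heq]
        exact MeasurableSet.empty
    set K : Finset C := Yall.image χ with hKdef
    have hcover : Q' ⊆ ⋃ c ∈ K, A c := by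
      intro x hx
      have hxQ : x ∈ Q' := hx
      simp only [hQ'def] at hx
      set σ : Fin d → Fin 3 := fun i => if x i < 0 then 0 else if 1 < x i then 1 else 2
        with hσdef
      have hπx : πQ x ∈ Face d σ := by
        refine Set.mem_univ_pi.2 fun i => ?_
        show clmp (x i) ∈ fset (σ i)
        simp only [hσdef]
        split_ifs with h1 h2
        · rw [fset0, clmp_of_neg h1]
          rfl
        · rw [fset1, clmp_of_gt h2]
          rfl
        · rw [fset2]
          exact clmp_mem (x i)
      obtain ⟨y, hyY, hyd⟩ := hY2 σ (πQ x) hπx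
      have hyYall : y ∈ Yall := by
        rw [hYalldef]
        exact Finset.mem_biUnion.2 ⟨σ, Finset.mem_univ _, hyY⟩
      have hyface := (hY1 σ y hyY).1
      refine mem_iUnion₂.2 ⟨χ y, ?_, ?_⟩
      · rw [hKdef]
        exact Finset.mem_image_of_mem χ hyYall
      · simp only [hAdef]
        refine ⟨hxQ, mem_iUnion₂.2 ⟨y, hyYall, rfl, hyd, fun i hi => ?_, fun i hi => ?_⟩⟩
        · have hm := Set.mem_univ_pi.1 hyface i
          simp only [hσdef, hi, if_true] at hm
          rw [fset0] at hm
          exact hm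
        · have hm := Set.mem_univ_pi.1 hyface i
          have hnot : ¬ x i < 0 := by linarith
          simp only [hσdef, hnot, hi, if_false, if_true] at hm
          rw [fset1] at hm
          exact hm
    have hexcl : ∀ c i, (∃ x' ∈ A c, x' i < 0) → ∀ x ∈ A c, x i ≤ 1 := by
      rintro c i ⟨x', hx', hx'i⟩ x hx
      by_contra hgt
      push_neg at hgt
      obtain ⟨y', hy'Λ, hy'c, -, hy'0, -⟩ := hwit c x' hx'
      obtain ⟨y, hyΛ, hyc, -, -, hy1⟩ := hwit c x hx
      exact hχ y hyΛ y' hy'Λ (dist_one_aux (hΛ hyΛ) (hΛ hy'Λ) (hy1 i hgt) (hy'0 i hx'i))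
        (by rw [hyc, hy'c])
    set w : C → (Fin d → ℝ) := fun c i => if (∃ x' ∈ A c, x' i < 0) then -a else 1+a with hwdef
    have hbounds : ∀ c, ∀ x ∈ A c, ∀ i,
        (w c i = -a ∧ -a ≤ x i ∧ x i ≤ 1) ∨ (w c i = 1+a ∧ 0 ≤ x i ∧ x i ≤ 1+a) := by
      intro c x hx i
      have hxQ : x ∈ Q' := hAsub c hx
      simp only [hQ'def] at hxQ
      by_cases h : ∃ x' ∈ A c, x' i < 0
      · left
        exact ⟨by simp only [hwdef]; rw [if_pos h], hxQ.1 i, hexcl c i h x hx⟩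
      · right
        refine ⟨by simp only [hwdef]; rw [if_neg h], ?_, hxQ.2 i⟩
        by_contra hneg
        push_neg at hneg
        exact h ⟨x, hx, hneg⟩
    set Φ : C → (Fin d → ℝ) → (Fin d → ℝ) := fun c x => β • (x - w c) + w c with hΦdef
    have hΦcoord : ∀ c x i, Φ c x i = β * (x i - w c i) + w c i := by
      intro c x i
      simp [hΦdef]
    set S : C → Set (Fin d → ℝ) := fun c => Φ c '' A c with hSdef
    have hSQ' : ∀ c, S c ⊆ Q' := by
      intro c z hz
      simp only [hSdef] at hz
      obtain ⟨x, hx, rfl⟩ := hz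
      simp only [hQ'def]
      constructor <;> intro i
      · show -a ≤ Φ c x i
        rcases hbounds c x hx i with ⟨hw, h1, h2⟩ | ⟨hw, h1, h2⟩
        · rw [hΦcoord, hw]
          exact (hom_bot_mem ha0 hβeq h1 h2).1
        · rw [hΦcoord, hw]
          exact (hom_top_mem ha0 hβeq h1 h2).1
      · show Φ c x i ≤ 1+a
        rcases hbounds c x hx i with ⟨hw, h1, h2⟩ | ⟨hw, h1, h2⟩
        · rw [hΦcoord, hw]
          exact (hom_bot_mem ha0 hβeq h1 h2).2
        · rw [hΦcoord, hw]
          exact (hom_top_mem ha0 hβeq h1 h2).2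
    have hSdist : ∀ c, ∀ z ∈ S c, ∃ y, y ∈ Λ ∧ χ y = c ∧ dist z y ≤ a + r := by
      intro c z hz
      simp only [hSdef] at hz
      obtain ⟨x, hx, rfl⟩ := hz
      obtain ⟨y, hyΛ, hyc, hyd, -, -⟩ := hwit c x hx
      refine ⟨y, hyΛ, hyc, ?_⟩
      calc dist (Φ c x) y ≤ dist (Φ c x) (πQ x) + dist (πQ x) y := dist_triangle _ _ _
        _ ≤ a + r := add_le_add ?_ hyd.le
      refine (dist_pi_le_iff ha0.le).2 fun i => ?_
      rw [Real.dist_eq, hΦcoord]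
      show |β * (x i - w c i) + w c i - clmp (x i)| ≤ a
      rcases hbounds c x hx i with ⟨hw, h1, h2⟩ | ⟨hw, h1, h2⟩
      · rw [hw]
        exact hom_bot_close ha0 hβeq h1 h2
      · rw [hw]
        exact hom_top_close ha0 hβeq h1 h2
    have hSmeas : ∀ c, MeasurableSet (S c) := by
      intro c
      have hinv : S c = (fun z => β⁻¹ • (z - w c) + w c) ⁻¹' (A c) := by
        simp only [hSdef]
        ext z
        simp only [mem_image, mem_preimage]
        constructor
        · rintro ⟨x, hx, rfl⟩
          have hkey : β⁻¹ • (Φ c x - w c) + w c = x := by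
            simp only [hΦdef]
            rw [add_sub_cancel_right, smul_smul, inv_mul_cancel₀ hβpos.ne', one_smul,
              sub_add_cancel]
          rw [hkey]
          exact hx
        · intro hz
          refine ⟨β⁻¹ • (z - w c) + w c, hz, ?_⟩
          simp only [hΦdef]
          rw [add_sub_cancel_right, smul_smul, mul_inv_cancel₀ hβpos.ne', one_smul,
            sub_add_cancel]
      rw [hinv]
      exact (((measurable_id.sub_const (w c)).const_smul β⁻¹).add_const (w c)) (hAmeas c)
    have hQ'vol : volume Q' = ENNReal.ofReal (1+2*a) ^ d := by
      rw [hQ'def, Real.volume_Icc_pi]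
      have h2 : ∀ i : Fin d, ENNReal.ofReal ((fun _ => 1+a) i - (fun _ => -a) i)
          = ENNReal.ofReal (1+2*a) := by
        intro i
        congr 1
        ring
      rw [Finset.prod_congr rfl fun i _ => h2 i, Finset.prod_const, Finset.card_univ,
        Fintype.card_fin]
    have hQ'0 : volume Q' ≠ 0 := by
      rw [hQ'vol]
      apply pow_ne_zero
      simp only [ne_eq, ENNReal.ofReal_eq_zero, not_le]
      linarith
    have hQ'top : volume Q' ≠ ⊤ := by
      rw [hQ'vol]
      exact ENNReal.pow_ne_top ENNReal.ofReal_ne_top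
    have hvolS : ∀ c, volume (S c) = ENNReal.ofReal (β^d) * volume (A c) := by
      intro c
      have hfun : Φ c = ⇑(AffineMap.homothety (w c) β) := by
        funext x
        simp only [hΦdef, AffineMap.homothety_apply, vsub_eq_sub, vadd_eq_add]
      have himg : S c = ⇑(AffineMap.homothety (w c) β) '' A c := by
        simp only [hSdef, hfun]
      rw [himg, Measure.addHaar_image_homothety]
      congr 1
      rw [show Module.finrank ℝ (Fin d → ℝ) = d by simp [Module.finrank_pi]]
      rw [abs_of_nonneg (pow_nonneg hβpos.le d)]
    have key : ∃ z : Fin d → ℝ, m ≤ (K.filter fun c => z ∈ S c).card := by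
      by_contra hcon
      push_neg at hcon
      have hSrest : ∀ c ∈ K, volume (S c) = (volume.restrict Q') (S c) := by
        intro c _
        rw [Measure.restrict_apply (hSmeas c), inter_eq_self_of_subset_left (hSQ' c)]
      have hup : ∑ c ∈ K, volume (S c) ≤ ((m - 1 : ℕ) : ℝ≥0∞) * volume Q' := by
        calc ∑ c ∈ K, volume (S c) = ∑ c ∈ K, (volume.restrict Q') (S c) :=
              Finset.sum_congr rfl hSrest
          _ = ∑ c ∈ K, ∫⁻ z, (S c).indicator (fun _ => (1:ℝ≥0∞)) z ∂(volume.restrict Q') := by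
              refine Finset.sum_congr rfl fun c _ => ?_
              rw [lintegral_indicator_const (hSmeas c), one_mul]
          _ = ∫⁻ z, ∑ c ∈ K, (S c).indicator (fun _ => (1:ℝ≥0∞)) z ∂(volume.restrict Q') :=
              (lintegral_finset_sum' K fun c _ =>
                ((measurable_const.indicator (hSmeas c)).aemeasurable)).symm
          _ ≤ ∫⁻ _, ((m - 1:ℕ) : ℝ≥0∞) ∂(volume.restrict Q') := by
              refine lintegral_mono fun z => ?_
              have hsum : ∑ c ∈ K, (S c).indicator (fun _ => (1:ℝ≥0∞)) z
                  = ((K.filter fun c => z ∈ S c).card : ℝ≥0∞) := by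
                rw [← Finset.sum_boole]
                exact Finset.sum_congr rfl fun c _ => by simp [Set.indicator_apply]
              rw [hsum]
              exact Nat.cast_le.2 (Nat.le_sub_one_of_lt (hcon z))
          _ = ((m-1:ℕ):ℝ≥0∞) * volume Q' := by
              rw [lintegral_const, Measure.restrict_apply_univ]
      have hlow : ENNReal.ofReal (β^d) * volume Q' ≤ ∑ c ∈ K, volume (S c) := by
        calc ENNReal.ofReal (β^d) * volume Q'
            ≤ ENNReal.ofReal (β^d) * ∑ c ∈ K, volume (A c) :=
              mul_le_mul_right ((measure_mono hcover).trans (measure_biUnion_finset_le K A)) _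
          _ = ∑ c ∈ K, ENNReal.ofReal (β^d) * volume (A c) := Finset.mul_sum _ _ _
          _ = ∑ c ∈ K, volume (S c) := Finset.sum_congr rfl fun c _ => (hvolS c).symm
      have hmb : ((m-1:ℕ):ℝ≥0∞) < ENNReal.ofReal (β^d) := by
        rw [← ENNReal.ofReal_natCast]
        refine (ENNReal.ofReal_lt_ofReal_iff (pow_pos hβpos d)).2 ?_
        rw [Nat.cast_sub hmpos, Nat.cast_one]
        exact hβd
      have hle : ENNReal.ofReal (β^d) ≤ ((m-1:ℕ):ℝ≥0∞) :=
        (ENNReal.mul_le_mul_iff_left hQ'0 hQ'top).1 (hlow.trans hup)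
      exact absurd hle (not_le.2 hmb)
    obtain ⟨z, hz⟩ := key
    refine ⟨πQ z, ?_, ?_⟩
    · constructor <;> intro i
      · exact (clmp_mem (z i)).1
      · exact (clmp_mem (z i)).2
    calc (m : ℕ∞)
        ≤ ((K.filter fun c => z ∈ S c).card : ℕ∞) := Nat.cast_le.2 hz
      _ = (↑(K.filter fun c => z ∈ S c) : Set C).encard :=
          (Set.encard_coe_eq_coe_finsetCard _).symm
      _ ≤ _ := Set.encard_mono ?_
    intro c hc
    simp only [Finset.coe_filter, mem_setOf_eq] at hc
    obtain ⟨-, hzS⟩ := hc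
    obtain ⟨y, hyΛ, hyc, hyd⟩ := hSdist c z hzS
    have hyIcc := hΛ hyΛ
    have h1 : dist (πQ z) y ≤ dist z y := by
      refine (dist_pi_le_iff dist_nonneg).2 fun i => ?_
      have hy0 : 0 ≤ y i := by have := hyIcc.1 i; simpa using this
      have hy1 : y i ≤ 1 := by have := hyIcc.2 i; simpa using this
      calc dist (πQ z i) (y i) = |clmp (z i) - y i| := by
            simp only [hπdef, Real.dist_eq]
        _ ≤ |z i - y i| := abs_clmp_sub_le hy0 hy1
        _ = dist (z i) (y i) := (Real.dist_eq _ _).symm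
        _ ≤ dist z y := dist_le_pi_dist z y i
    refine ⟨y, ⟨hyΛ, ?_⟩, ?_⟩
    · simp [hyc]
    · rw [mem_ball, dist_comm]
      exact lt_of_le_of_lt h1 (lt_of_le_of_lt hyd har)
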